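/- Let d ≥ 1. Let v : ℝ^d → ℝ^d be of class C¹ with div v = 0 and sup_x ‖Dv(x)‖ < ∞; let U : ℝ^d → ℝ be of class C¹ with U and ∇U bounded; and let Q : ℝ^d → ℝ be a Schwartz function. Then for every x ∈ ℝ^d, | v(x)·∇(Q ∗ U)(x) − ( Q ∗ (v·∇U) )(x) | ≤ ( sup_y ‖Dv(y)‖ ) · ( sup_y |U(y)| ) · ∫_{ℝ^d} |h| |∇Q(h)| dh. -/

import Mathlib

open MeasureTheory

namespace SCEaux

variable {d : ℕ}

lemma pi_sum_single (w : Fin d → ℝ) : w = ∑ j, w j • (Pi.single j 1 : Fin d → ℝ) := by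
  ext k
  simp [Pi.single_apply]

lemma clm_sum (L : (Fin d → ℝ) →L[ℝ] ℝ) (w : Fin d → ℝ) :
    L w = ∑ j, w j * L (Pi.single j 1) := by
  conv_lhs => rw [pi_sum_single w]
  rw [map_sum]
  simp [smul_eq_mul]

lemma integrable_of_bound {V : Type*} [NormedAddCommGroup V] [NormedSpace ℝ V]
    (f : (Fin d → ℝ) → ℝ) (hf : Continuous f) (φ : SchwartzMap (Fin d → ℝ) V) (A B : ℝ)
    (hbd : ∀ h, ‖f h‖ ≤ (A + B * ‖h‖) * ‖φ h‖) : Integrable f := by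
  have h0 := φ.integrable_pow_mul volume 0
  have h1 := φ.integrable_pow_mul volume 1
  have hInt : Integrable (fun h : Fin d → ℝ => A * (‖h‖ ^ 0 * ‖φ h‖) + B * (‖h‖ ^ 1 * ‖φ h‖)) :=
    (h0.const_mul A).add (h1.const_mul B)
  refine hInt.mono' hf.aestronglyMeasurable (Filter.Eventually.of_forall fun h => ?_)
  have := hbd h
  simpa [pow_one] using this.trans_eq (by ring)

lemma comp_neg_id (L : (Fin d → ℝ) →L[ℝ] ℝ) :
    L.comp (-(ContinuousLinearMap.id ℝ (Fin d → ℝ))) = -L := by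
  ext y; simp

end SCEaux
namespace SCEaux2
open SCEaux

variable {d : ℕ}

lemma norm_single_le_one (j : Fin d) : ‖(Pi.single j 1 : Fin d → ℝ)‖ ≤ 1 := by
  refine (pi_norm_le_iff_of_nonneg zero_le_one).2 fun k => ?_
  rcases eq_or_ne k j with rfl | hk
  · simp
  · simp [Pi.single_apply, hk]

lemma hasFDerivAt_sub_left (x h : Fin d → ℝ) :
    HasFDerivAt (fun h : Fin d → ℝ => x - h)
      (-(ContinuousLinearMap.id ℝ (Fin d → ℝ))) h :=
  (hasFDerivAt_id h).const_sub x

lemma ibp_key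
    (U : (Fin d → ℝ) → ℝ) (hU : ContDiff ℝ 1 U)
    {CU CDU : ℝ} (hUbd : ∀ y, |U y| ≤ CU) (hDU : ∀ y, ‖fderiv ℝ U y‖ ≤ CDU)
    (w : (Fin d → ℝ) → Fin d → ℝ) (hw : ContDiff ℝ 1 w)
    (hwdiv : ∀ y : Fin d → ℝ, (∑ i, fderiv ℝ w y (Pi.single i 1) i) = 0)
    {Aw Bw Cw : ℝ} (hBw : 0 ≤ Bw) (hwbd : ∀ y, ‖w y‖ ≤ Aw + Bw * ‖y‖)
    (hDw : ∀ y, ‖fderiv ℝ w y‖ ≤ Cw)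
    (Q : SchwartzMap (Fin d → ℝ) ℝ) (x : Fin d → ℝ) :
    ∫ h : Fin d → ℝ, U (x - h) * fderiv ℝ (⇑Q) h (w (x - h))
      = ∫ h : Fin d → ℝ, fderiv ℝ U (x - h) (w (x - h)) * Q h := by
  have hCU : 0 ≤ CU := le_trans (abs_nonneg _) (hUbd x)
  have hCDU : 0 ≤ CDU := le_trans (norm_nonneg _) (hDU x)
  -- continuity facts
  have hUcont : Continuous U := hU.continuous
  have hwcont : Continuous w := hw.continuous
  have hDUcont : Continuous (fderiv ℝ U) := hU.continuous_fderiv one_ne_zero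
  have hDwcont : Continuous (fderiv ℝ w) := hw.continuous_fderiv one_ne_zero
  have hsub : Continuous (fun h : Fin d → ℝ => x - h) := continuous_const.sub continuous_id
  have hQd : Continuous (fderiv ℝ (⇑Q)) := (Q.smooth 1).continuous_fderiv one_ne_zero
  -- growth of w (x - h)
  have hwgrow : ∀ h : Fin d → ℝ, ‖w (x - h)‖ ≤ (Aw + Bw * ‖x‖) + Bw * ‖h‖ := by
    intro h
    refine (hwbd (x - h)).trans ?_
    have : ‖x - h‖ ≤ ‖x‖ + ‖h‖ := norm_sub_le x h
    nlinarith
  -- the functions f_j and their derivatives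
  set fj : Fin d → (Fin d → ℝ) → ℝ := fun j h => U (x - h) * w (x - h) j with hfj_def
  set Dj : Fin d → (Fin d → ℝ) → (Fin d → ℝ) →L[ℝ] ℝ := fun j h =>
    U (x - h) • ((ContinuousLinearMap.proj j).comp
        ((fderiv ℝ w (x - h)).comp (-(ContinuousLinearMap.id ℝ (Fin d → ℝ)))))
      + w (x - h) j • ((fderiv ℝ U (x - h)).comp
          (-(ContinuousLinearMap.id ℝ (Fin d → ℝ)))) with hDj_def
  have hfj : ∀ j h, HasFDerivAt (fj j) (Dj j h) h := by
    intro j h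
    have h1 : HasFDerivAt (fun h : Fin d → ℝ => U (x - h))
        ((fderiv ℝ U (x - h)).comp (-(ContinuousLinearMap.id ℝ (Fin d → ℝ)))) h :=
      ((hU.differentiable one_ne_zero (x - h)).hasFDerivAt).comp h (hasFDerivAt_sub_left x h)
    have h2 : HasFDerivAt (fun h : Fin d → ℝ => w (x - h))
        ((fderiv ℝ w (x - h)).comp (-(ContinuousLinearMap.id ℝ (Fin d → ℝ)))) h :=
      ((hw.differentiable one_ne_zero (x - h)).hasFDerivAt).comp h (hasFDerivAt_sub_left x h)
    have h3 : HasFDerivAt (fun h : Fin d → ℝ => w (x - h) j)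
        ((ContinuousLinearMap.proj j).comp
          ((fderiv ℝ w (x - h)).comp (-(ContinuousLinearMap.id ℝ (Fin d → ℝ))))) h := by
      exact ((ContinuousLinearMap.proj (R := ℝ) (φ := fun _ : Fin d => ℝ) j).hasFDerivAt).comp h h2
    exact h1.mul h3
  -- pointwise value of Dj applied to e_j
  have hDj_apply : ∀ j h, (Dj j h) (Pi.single j 1)
      = -(U (x - h) * (fderiv ℝ w (x - h) (Pi.single j 1)) j)
        - w (x - h) j * fderiv ℝ U (x - h) (Pi.single j 1) := by
    intro j h
    simp [hDj_def, mul_comm]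
    ring
  -- continuity of fj and of the applied derivative
  have hfj_cont : ∀ j, Continuous (fj j) := fun j =>
    (hUcont.comp hsub).mul ((continuous_apply j).comp (hwcont.comp hsub))
  -- bound on fj
  have hfj_bd : ∀ (j : Fin d) (h : Fin d → ℝ),
      |fj j h| ≤ CU * (Aw + Bw * ‖x‖) + CU * Bw * ‖h‖ := by
    intro j h
    have h1 : |w (x - h) j| ≤ ‖w (x - h)‖ := norm_le_pi_norm (w (x - h)) j
    have h2 := hwgrow h
    calc |fj j h| = |U (x - h)| * |w (x - h) j| := abs_mul _ _
    _ ≤ CU * ((Aw + Bw * ‖x‖) + Bw * ‖h‖) :=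
        mul_le_mul (hUbd _) (h1.trans h2) (abs_nonneg _) hCU
    _ = CU * (Aw + Bw * ‖x‖) + CU * Bw * ‖h‖ := by ring
  -- bound on Dj applied to e_j
  have hDj_bd : ∀ (j : Fin d) (h : Fin d → ℝ),
      |(Dj j h) (Pi.single j 1)| ≤
        (CU * Cw + CDU * (Aw + Bw * ‖x‖)) + CDU * Bw * ‖h‖ := by
    intro j h
    rw [hDj_apply j h]
    have e1 : |(fderiv ℝ w (x - h) (Pi.single j 1)) j| ≤ Cw := by
      refine le_trans (norm_le_pi_norm (fderiv ℝ w (x - h) (Pi.single j 1)) j) ?_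
      calc ‖fderiv ℝ w (x - h) (Pi.single j 1)‖
          ≤ ‖fderiv ℝ w (x - h)‖ * ‖(Pi.single j 1 : Fin d → ℝ)‖ :=
            ContinuousLinearMap.le_opNorm _ _
      _ ≤ Cw * 1 := mul_le_mul (hDw _) (norm_single_le_one j) (norm_nonneg _)
            ((norm_nonneg _).trans (hDw (x - h)))
      _ = Cw := mul_one _
    have e2 : |fderiv ℝ U (x - h) (Pi.single j 1)| ≤ CDU := by
      rw [← Real.norm_eq_abs]
      calc ‖fderiv ℝ U (x - h) (Pi.single j 1)‖
          ≤ ‖fderiv ℝ U (x - h)‖ * ‖(Pi.single j 1 : Fin d → ℝ)‖ :=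
            ContinuousLinearMap.le_opNorm _ _
      _ ≤ CDU * 1 := mul_le_mul (hDU _) (norm_single_le_one j) (norm_nonneg _)
            ((norm_nonneg _).trans (hDU (x - h)))
      _ = CDU := mul_one _
    have e3 : |w (x - h) j| ≤ (Aw + Bw * ‖x‖) + Bw * ‖h‖ :=
      (norm_le_pi_norm (w (x - h)) j).trans (hwgrow h)
    have e4 := hUbd (x - h)
    have h5 : |(-(U (x - h) * (fderiv ℝ w (x - h) (Pi.single j 1)) j)
        - w (x - h) j * fderiv ℝ U (x - h) (Pi.single j 1))|
        ≤ |U (x - h)| * |(fderiv ℝ w (x - h) (Pi.single j 1)) j|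
          + |w (x - h) j| * |fderiv ℝ U (x - h) (Pi.single j 1)| := by
      refine (abs_sub _ _).trans ?_
      rw [abs_neg, abs_mul, abs_mul]
    refine h5.trans ?_
    have m1 : |U (x - h)| * |(fderiv ℝ w (x - h) (Pi.single j 1)) j| ≤ CU * Cw :=
      mul_le_mul e4 e1 (abs_nonneg _) hCU
    have m2 : |w (x - h) j| * |fderiv ℝ U (x - h) (Pi.single j 1)|
        ≤ ((Aw + Bw * ‖x‖) + Bw * ‖h‖) * CDU := by
      refine mul_le_mul e3 e2 (abs_nonneg _) ?_
      have := abs_nonneg (w (x - h) j)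
      nlinarith [e3]
    nlinarith [m1, m2]
  -- integrability statements
  have hQcont : Continuous (⇑Q) := Q.continuous
  have hDQ_le : ∀ (j : Fin d) (h : Fin d → ℝ),
      |fderiv ℝ (⇑Q) h (Pi.single j 1)| ≤ ‖SchwartzMap.fderivCLM ℝ (Fin d → ℝ) ℝ Q h‖ := by
    intro j h
    rw [SchwartzMap.fderivCLM_apply, ← Real.norm_eq_abs]
    calc ‖fderiv ℝ (⇑Q) h (Pi.single j 1)‖
        ≤ ‖fderiv ℝ (⇑Q) h‖ * ‖(Pi.single j 1 : Fin d → ℝ)‖ :=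
          ContinuousLinearMap.le_opNorm _ _
    _ ≤ ‖fderiv ℝ (⇑Q) h‖ * 1 :=
          mul_le_mul_of_nonneg_left (norm_single_le_one j) (norm_nonneg _)
    _ = ‖fderiv ℝ (⇑Q) h‖ := mul_one _
  have hfg : ∀ j : Fin d, Integrable (fun h : Fin d → ℝ => fj j h * Q h) := by
    intro j
    refine integrable_of_bound _ ((hfj_cont j).mul hQcont) Q
      (CU * (Aw + Bw * ‖x‖)) (CU * Bw) fun h => ?_
    rw [Real.norm_eq_abs, abs_mul]
    exact mul_le_mul_of_nonneg_right (hfj_bd j h) (abs_nonneg _)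
  have hfg' : ∀ j : Fin d,
      Integrable (fun h : Fin d → ℝ => fj j h * fderiv ℝ (⇑Q) h (Pi.single j 1)) := by
    intro j
    refine integrable_of_bound _ ((hfj_cont j).mul (hQd.clm_apply continuous_const))
      (SchwartzMap.fderivCLM ℝ (Fin d → ℝ) ℝ Q) (CU * (Aw + Bw * ‖x‖)) (CU * Bw) fun h => ?_
    rw [Real.norm_eq_abs, abs_mul]
    exact mul_le_mul (hfj_bd j h) (hDQ_le j h) (abs_nonneg _) (by
      have := hfj_bd j h; have := abs_nonneg (fj j h); nlinarith)
  have hf'g : ∀ j : Fin d,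
      Integrable (fun h : Fin d → ℝ => fderiv ℝ (fj j) h (Pi.single j 1) * Q h) := by
    intro j
    have hrw : (fun h : Fin d → ℝ => fderiv ℝ (fj j) h (Pi.single j 1) * Q h)
        = fun h => (Dj j h) (Pi.single j 1) * Q h := by
      funext h; rw [(hfj j h).fderiv]
    rw [hrw]
    have hcont : Continuous (fun h : Fin d → ℝ => (Dj j h) (Pi.single j 1)) := by
      have : (fun h : Fin d → ℝ => (Dj j h) (Pi.single j 1))
          = fun h => -(U (x - h) * (fderiv ℝ w (x - h) (Pi.single j 1)) j)
            - w (x - h) j * fderiv ℝ U (x - h) (Pi.single j 1) := by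
        funext h; rw [hDj_apply j h]
      rw [this]
      have c1 : Continuous fun h : Fin d → ℝ => (fderiv ℝ w (x - h) (Pi.single j 1)) j :=
        (continuous_apply j).comp ((hDwcont.comp hsub).clm_apply continuous_const)
      have c2 : Continuous fun h : Fin d → ℝ => fderiv ℝ U (x - h) (Pi.single j 1) :=
        (hDUcont.comp hsub).clm_apply continuous_const
      exact (((hUcont.comp hsub).mul c1).neg).sub
        (((continuous_apply j).comp (hwcont.comp hsub)).mul c2)
    refine integrable_of_bound _ (hcont.mul hQcont) Q
      (CU * Cw + CDU * (Aw + Bw * ‖x‖)) (CDU * Bw) fun h => ?_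
    rw [Real.norm_eq_abs, abs_mul]
    refine mul_le_mul_of_nonneg_right ((hDj_bd j h).trans (le_of_eq (by ring))) (abs_nonneg _)
  -- integration by parts in each coordinate
  have IBP : ∀ j : Fin d,
      ∫ h : Fin d → ℝ, fj j h * fderiv ℝ (⇑Q) h (Pi.single j 1)
        = -∫ h : Fin d → ℝ, fderiv ℝ (fj j) h (Pi.single j 1) * Q h := fun j =>
    integral_mul_fderiv_eq_neg_fderiv_mul_of_integrable (hf'g j) (hfg' j) (hfg j)
      (fun h _ => (hfj j h).differentiableAt) (fun h _ => Q.differentiableAt)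
  -- assemble
  calc ∫ h : Fin d → ℝ, U (x - h) * fderiv ℝ (⇑Q) h (w (x - h))
      = ∫ h : Fin d → ℝ, ∑ j, fj j h * fderiv ℝ (⇑Q) h (Pi.single j 1) := by
        refine integral_congr_ae (Filter.Eventually.of_forall fun h => ?_)
        show U (x - h) * fderiv ℝ (⇑Q) h (w (x - h))
          = ∑ j, fj j h * fderiv ℝ (⇑Q) h (Pi.single j 1)
        rw [clm_sum (fderiv ℝ (⇑Q) h) (w (x - h)), Finset.mul_sum]
        exact Finset.sum_congr rfl fun j _ => by rw [hfj_def]; ring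
  _ = ∑ j, ∫ h : Fin d → ℝ, fj j h * fderiv ℝ (⇑Q) h (Pi.single j 1) :=
        integral_finset_sum _ fun j _ => hfg' j
  _ = ∑ j, -∫ h : Fin d → ℝ, fderiv ℝ (fj j) h (Pi.single j 1) * Q h :=
        Finset.sum_congr rfl fun j _ => IBP j
  _ = -∫ h : Fin d → ℝ, ∑ j, fderiv ℝ (fj j) h (Pi.single j 1) * Q h := by
        rw [integral_finset_sum _ fun j _ => hf'g j, Finset.sum_neg_distrib]
  _ = -∫ h : Fin d → ℝ, -(fderiv ℝ U (x - h) (w (x - h)) * Q h) := by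
        congr 1
        refine integral_congr_ae (Filter.Eventually.of_forall fun h => ?_)
        show ∑ j, fderiv ℝ (fj j) h (Pi.single j 1) * Q h
          = -(fderiv ℝ U (x - h) (w (x - h)) * Q h)
        have : ∀ j : Fin d, fderiv ℝ (fj j) h (Pi.single j 1)
            = -(U (x - h) * (fderiv ℝ w (x - h) (Pi.single j 1)) j)
              - w (x - h) j * fderiv ℝ U (x - h) (Pi.single j 1) := fun j => by
          rw [(hfj j h).fderiv, hDj_apply j h]
        calc ∑ j, fderiv ℝ (fj j) h (Pi.single j 1) * Q h
            = (∑ j, (-(U (x - h) * (fderiv ℝ w (x - h) (Pi.single j 1)) j)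
                - w (x - h) j * fderiv ℝ U (x - h) (Pi.single j 1))) * Q h := by
              rw [← Finset.sum_mul]
              exact congrArg (· * Q h) (Finset.sum_congr rfl fun j _ => by rw [this j])
        _ = (-(U (x - h) * ∑ j, (fderiv ℝ w (x - h) (Pi.single j 1)) j)
              - fderiv ℝ U (x - h) (w (x - h))) * Q h := by
              rw [Finset.sum_sub_distrib, Finset.sum_neg_distrib, ← Finset.mul_sum,
                ← clm_sum (fderiv ℝ U (x - h)) (w (x - h))]
        _ = -(fderiv ℝ U (x - h) (w (x - h)) * Q h) := by
              rw [hwdiv (x - h)]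
              ring
  _ = ∫ h : Fin d → ℝ, fderiv ℝ U (x - h) (w (x - h)) * Q h := by
        rw [integral_neg, neg_neg]

lemma conv_deriv
    (U : (Fin d → ℝ) → ℝ) (hU : ContDiff ℝ 1 U)
    {CU CDU : ℝ} (hUbd : ∀ y, |U y| ≤ CU) (hDU : ∀ y, ‖fderiv ℝ U y‖ ≤ CDU)
    (Q : SchwartzMap (Fin d → ℝ) ℝ) (x : Fin d → ℝ) (u : Fin d → ℝ) :
    fderiv ℝ (fun y => ∫ h : Fin d → ℝ, U (y - h) * Q h) x u
      = ∫ h : Fin d → ℝ, fderiv ℝ U (x - h) u * Q h := by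
  have hUcont : Continuous U := hU.continuous
  have hDUcont : Continuous (fderiv ℝ U) := hU.continuous_fderiv one_ne_zero
  have hF'cont : Continuous (fun h : Fin d → ℝ => Q h • fderiv ℝ U (x - h)) :=
    Q.continuous.smul (hDUcont.comp (continuous_const.sub continuous_id))
  have hF'bd : ∀ (y : Fin d → ℝ) (h : Fin d → ℝ),
      ‖Q h • fderiv ℝ U (y - h)‖ ≤ ‖Q h‖ * CDU := by
    intro y h
    rw [norm_smul]
    exact mul_le_mul_of_nonneg_left (hDU _) (norm_nonneg _)
  have hbd_int : Integrable (fun h : Fin d → ℝ => ‖Q h‖ * CDU) :=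
    (Q.integrable (μ := volume)).norm.mul_const CDU
  have key : HasFDerivAt (fun y => ∫ h : Fin d → ℝ, U (y - h) * Q h)
      (∫ h : Fin d → ℝ, Q h • fderiv ℝ U (x - h)) x := by
    refine hasFDerivAt_integral_of_dominated_of_fderiv_le
      (F' := fun (y : Fin d → ℝ) (h : Fin d → ℝ) => Q h • fderiv ℝ U (y - h))
      (bound := fun h => ‖Q h‖ * CDU) (Metric.ball_mem_nhds x one_pos)
      (Filter.Eventually.of_forall fun y => ?_) ?_ ?_
      (Filter.Eventually.of_forall fun h => fun y _ => hF'bd y h) hbd_int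
      (Filter.Eventually.of_forall fun h => fun y _ => ?_)
    · exact ((hUcont.comp (continuous_const.sub continuous_id)).mul
        Q.continuous).aestronglyMeasurable
    · refine integrable_of_bound _
        ((hUcont.comp (continuous_const.sub continuous_id)).mul Q.continuous) Q CU 0
        fun h => ?_
      rw [Real.norm_eq_abs, abs_mul]
      have := mul_le_mul_of_nonneg_right (hUbd (x - h)) (abs_nonneg (Q h))
      simpa using this
    · exact hF'cont.aestronglyMeasurable
    · have h1 : HasFDerivAt (fun y : Fin d → ℝ => U (y - h)) (fderiv ℝ U (y - h)) y := by
        have := ((hU.differentiable one_ne_zero (y - h)).hasFDerivAt).comp y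
          ((hasFDerivAt_id y).sub_const h)
        simpa [Function.comp_def] using this
      exact h1.mul_const (Q h)
  rw [key.fderiv]
  have hint : Integrable (fun h : Fin d → ℝ => Q h • fderiv ℝ U (x - h)) volume :=
    hbd_int.mono' hF'cont.aestronglyMeasurable
      (Filter.Eventually.of_forall fun h => hF'bd x h)
  rw [ContinuousLinearMap.integral_apply hint]
  refine integral_congr_ae (Filter.Eventually.of_forall fun h => ?_)
  show (Q h • fderiv ℝ U (x - h)) u = fderiv ℝ U (x - h) u * Q h
  simp [smul_eq_mul, mul_comm]

end SCEaux2


open SCEaux SCEaux2 in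
/-- Commutator estimate for a frequency-localized solution operator: for a
divergence-free `C¹` field `v` with bounded derivative, a bounded `C¹` function `U` with
bounded gradient, and a Schwartz kernel `Q`,
`|v·∇(Q∗U)(x) − (Q∗(v·∇U))(x)| ≤ sup‖Dv‖ · sup|U| · ∫ |h| |∇Q(h)| dh`. -/
theorem schwartz_commutator_estimate (d : ℕ) (hd : 1 ≤ d)
    (v : (Fin d → ℝ) → Fin d → ℝ) (hv : ContDiff ℝ 1 v)
    (hdiv : ∀ x : Fin d → ℝ, (∑ i, fderiv ℝ v x (Pi.single i 1) i) = 0)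
    (hDv : ∃ C : ℝ, ∀ x, ‖fderiv ℝ v x‖ ≤ C)
    (U : (Fin d → ℝ) → ℝ) (hU : ContDiff ℝ 1 U)
    (hUbd : ∃ C : ℝ, ∀ x, |U x| ≤ C)
    (hDU : ∃ C : ℝ, ∀ x, ‖fderiv ℝ U x‖ ≤ C)
    (Q : SchwartzMap (Fin d → ℝ) ℝ) :
    ∀ x : Fin d → ℝ,
      |fderiv ℝ (fun y => ∫ h : Fin d → ℝ, U (y - h) * Q h) x (v x) -
          ∫ h : Fin d → ℝ, fderiv ℝ U (x - h) (v (x - h)) * Q h| ≤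
        (⨆ y : Fin d → ℝ, ‖fderiv ℝ v y‖) * (⨆ y : Fin d → ℝ, |U y|) *
          ∫ h : Fin d → ℝ, ‖h‖ * ‖fderiv ℝ (⇑Q) h‖ := by
  intro x
  obtain ⟨Cv0, hCv0⟩ := hDv
  obtain ⟨CDU, hCDU⟩ := hDU
  set Cv := ⨆ y : Fin d → ℝ, ‖fderiv ℝ v y‖ with hCv_def
  set CU := ⨆ y : Fin d → ℝ, |U y| with hCU_def
  have hCv_le : ∀ y, ‖fderiv ℝ v y‖ ≤ Cv :=
    fun y => le_ciSup ⟨Cv0, by rintro z ⟨y, rfl⟩; exact hCv0 y⟩ y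
  have hCU_le : ∀ y, |U y| ≤ CU := by
    obtain ⟨CU0, hCU0⟩ := hUbd
    exact fun y => le_ciSup ⟨CU0, by rintro z ⟨y, rfl⟩; exact hCU0 y⟩ y
  have hCv_nn : 0 ≤ Cv := le_trans (norm_nonneg _) (hCv_le 0)
  have hCU_nn : 0 ≤ CU := le_trans (abs_nonneg _) (hCU_le 0)
  -- Lipschitz bound for v
  have hlip : ∀ a b : Fin d → ℝ, ‖v a - v b‖ ≤ Cv * ‖a - b‖ := fun a b =>
    Convex.norm_image_sub_le_of_norm_fderiv_le
      (fun y _ => (hv.differentiable one_ne_zero).differentiableAt)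
      (fun y _ => hCv_le y) convex_univ (Set.mem_univ b) (Set.mem_univ a)
  have hgrow : ∀ y : Fin d → ℝ, ‖v y‖ ≤ ‖v 0‖ + Cv * ‖y‖ := by
    intro y
    have h1 := hlip y 0
    rw [sub_zero] at h1
    have h2 : ‖v y‖ ≤ ‖v 0‖ + ‖v y - v 0‖ := by
      simpa using norm_add_le (v 0) (v y - v 0)
    linarith
  -- step 1: derivative of the convolution
  have T1 : fderiv ℝ (fun y => ∫ h : Fin d → ℝ, U (y - h) * Q h) x (v x)
      = ∫ h : Fin d → ℝ, fderiv ℝ U (x - h) (v x) * Q h :=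
    conv_deriv U hU hCU_le hCDU Q x (v x)
  -- step 2: integration by parts with the constant field `v x`
  have T1' : ∫ h : Fin d → ℝ, fderiv ℝ U (x - h) (v x) * Q h
      = ∫ h : Fin d → ℝ, U (x - h) * fderiv ℝ (⇑Q) h (v x) := by
    have := ibp_key U hU hCU_le hCDU (fun _ => v x) contDiff_const
      (fun y => by simp) (le_refl (0:ℝ))
      (Aw := ‖v x‖) (Cw := 0)
      (fun y => by simp) (fun y => by simp [fderiv_const]) Q x
    exact this.symm
  -- step 3: integration by parts with the field `v`
  have T2 : ∫ h : Fin d → ℝ, fderiv ℝ U (x - h) (v (x - h)) * Q h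
      = ∫ h : Fin d → ℝ, U (x - h) * fderiv ℝ (⇑Q) h (v (x - h)) :=
    (ibp_key U hU hCU_le hCDU v hv hdiv hCv_nn (Aw := ‖v 0‖) (Cw := Cv)
      hgrow hCv_le Q x).symm
  rw [T1, T1', T2]
  -- integrability of the two integrands
  have hQd : Continuous (fderiv ℝ (⇑Q)) := (Q.smooth 1).continuous_fderiv one_ne_zero
  have hsub : Continuous (fun h : Fin d → ℝ => x - h) := continuous_const.sub continuous_id
  have hUcont : Continuous U := hU.continuous
  have I1 : Integrable (fun h : Fin d → ℝ => U (x - h) * fderiv ℝ (⇑Q) h (v x)) := by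
    refine integrable_of_bound _ ((hUcont.comp hsub).mul (hQd.clm_apply continuous_const))
      (SchwartzMap.fderivCLM ℝ (Fin d → ℝ) ℝ Q) (CU * ‖v x‖) 0 fun h => ?_
    rw [Real.norm_eq_abs, abs_mul, SchwartzMap.fderivCLM_apply]
    have b1 : |fderiv ℝ (⇑Q) h (v x)| ≤ ‖fderiv ℝ (⇑Q) h‖ * ‖v x‖ := by
      rw [← Real.norm_eq_abs]; exact ContinuousLinearMap.le_opNorm _ _
    have b2 := hCU_le (x - h)
    nlinarith [abs_nonneg (U (x - h)), norm_nonneg (fderiv ℝ (⇑Q) h), norm_nonneg (v x),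
      abs_nonneg (fderiv ℝ (⇑Q) h (v x))]
  have I2 : Integrable (fun h : Fin d → ℝ => U (x - h) * fderiv ℝ (⇑Q) h (v (x - h))) := by
    refine integrable_of_bound _
      ((hUcont.comp hsub).mul (hQd.clm_apply (hv.continuous.comp hsub)))
      (SchwartzMap.fderivCLM ℝ (Fin d → ℝ) ℝ Q) (CU * (‖v 0‖ + Cv * ‖x‖)) (CU * Cv) fun h => ?_
    rw [Real.norm_eq_abs, abs_mul, SchwartzMap.fderivCLM_apply]
    have b1 : |fderiv ℝ (⇑Q) h (v (x - h))| ≤ ‖fderiv ℝ (⇑Q) h‖ * ‖v (x - h)‖ := by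
      rw [← Real.norm_eq_abs]; exact ContinuousLinearMap.le_opNorm _ _
    have b2 := hCU_le (x - h)
    have b3 : ‖v (x - h)‖ ≤ (‖v 0‖ + Cv * ‖x‖) + Cv * ‖h‖ := by
      refine (hgrow (x - h)).trans ?_
      have := norm_sub_le x h
      nlinarith
    nlinarith [abs_nonneg (U (x - h)), norm_nonneg (fderiv ℝ (⇑Q) h),
      norm_nonneg (v (x - h)), abs_nonneg (fderiv ℝ (⇑Q) h (v (x - h))),
      mul_le_mul_of_nonneg_left b3 (norm_nonneg (fderiv ℝ (⇑Q) h))]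
  rw [← integral_sub I1 I2, ← Real.norm_eq_abs]
  -- final estimate
  have Ib : Integrable (fun h : Fin d → ℝ => Cv * CU * (‖h‖ * ‖fderiv ℝ (⇑Q) h‖)) := by
    have := ((SchwartzMap.fderivCLM ℝ (Fin d → ℝ) ℝ Q).integrable_pow_mul volume 1).const_mul (Cv * CU)
    simpa [SchwartzMap.fderivCLM_apply, pow_one] using this
  have hb : ∀ h : Fin d → ℝ,
      ‖U (x - h) * fderiv ℝ (⇑Q) h (v x) - U (x - h) * fderiv ℝ (⇑Q) h (v (x - h))‖
        ≤ Cv * CU * (‖h‖ * ‖fderiv ℝ (⇑Q) h‖) := by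
    intro h
    have e1 : U (x - h) * fderiv ℝ (⇑Q) h (v x) - U (x - h) * fderiv ℝ (⇑Q) h (v (x - h))
        = U (x - h) * fderiv ℝ (⇑Q) h (v x - v (x - h)) := by
      rw [map_sub, mul_sub]
    rw [e1, Real.norm_eq_abs, abs_mul]
    have b1 : |fderiv ℝ (⇑Q) h (v x - v (x - h))|
        ≤ ‖fderiv ℝ (⇑Q) h‖ * ‖v x - v (x - h)‖ := by
      rw [← Real.norm_eq_abs]; exact ContinuousLinearMap.le_opNorm _ _
    have b2 : ‖v x - v (x - h)‖ ≤ Cv * ‖h‖ := by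
      simpa [sub_sub_cancel] using hlip x (x - h)
    have b3 := hCU_le (x - h)
    nlinarith [abs_nonneg (U (x - h)), norm_nonneg (fderiv ℝ (⇑Q) h),
      norm_nonneg (v x - v (x - h)), abs_nonneg (fderiv ℝ (⇑Q) h (v x - v (x - h))),
      mul_le_mul_of_nonneg_left b2 (norm_nonneg (fderiv ℝ (⇑Q) h))]
  refine le_trans (norm_integral_le_of_norm_le Ib (Filter.Eventually.of_forall hb)) ?_
  rw [integral_const_mul]
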